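/- Let n be a positive integer, let Π be an n × n complex Hermitian positive semidefinite matrix, and let s ≥ 0. Suppose that for every unit vector χ : Fin n → ℝ with χ(i) ≥ 0 for all i, one has ⟨χ, Π χ⟩ ≤ s. Then for every unit vector φ : Fin n → ℂ, ⟨φ, Π φ⟩ ≤ 4s (the quadratic form being real since Π is Hermitian). -/

import Mathlib

open Matrix ComplexOrder
section Aux
variable {n : ℕ}

noncomputable def eNorm (w : Fin n → ℂ) : ℝ :=
  ‖(WithLp.equiv 2 (Fin n → ℂ)).symm w‖

lemma eNorm_nonneg (w : Fin n → ℂ) : 0 ≤ eNorm w := norm_nonneg _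

lemma eNorm_sq (w : Fin n → ℂ) : eNorm w ^ 2 = (star w ⬝ᵥ w).re := by
  have h := EuclideanSpace.norm_eq ((WithLp.equiv 2 (Fin n → ℂ)).symm w)
  rw [eNorm, h, Real.sq_sqrt (Finset.sum_nonneg fun i _ => sq_nonneg _)]
  simp only [dotProduct, Pi.star_apply, Complex.re_sum]
  refine Finset.sum_congr rfl fun i _ => ?_
  simp only [WithLp.equiv_symm_apply, PiLp.toLp_apply, ← Complex.normSq_eq_norm_sq,
    RingHom.id_apply]
  rw [show (star (w i) * w i) = (starRingEnd ℂ) (w i) * w i from rfl,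
    mul_comm, Complex.mul_conj]
  simp

lemma eNorm_add_le (u v : Fin n → ℂ) : eNorm (u + v) ≤ eNorm u + eNorm v := by
  have : (WithLp.equiv 2 (Fin n → ℂ)).symm (u + v)
      = (WithLp.equiv 2 (Fin n → ℂ)).symm u + (WithLp.equiv 2 (Fin n → ℂ)).symm v := rfl
  rw [eNorm, this]
  exact norm_add_le _ _

lemma eNorm_smul (c : ℂ) (v : Fin n → ℂ) : eNorm (c • v) = ‖c‖ * eNorm v := by
  have : (WithLp.equiv 2 (Fin n → ℂ)).symm (c • v)
      = c • (WithLp.equiv 2 (Fin n → ℂ)).symm v := rfl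
  rw [eNorm, this, norm_smul, eNorm]
end Aux

lemma eNorm_zero {n : ℕ} : eNorm (0 : Fin n → ℂ) = 0 := by
  have := eNorm_smul (0 : ℂ) (0 : Fin n → ℂ)
  simpa using this

lemma sqrt_add_sqrt_le {A B : ℝ} (hA : 0 ≤ A) (hB : 0 ≤ B) :
    Real.sqrt A + Real.sqrt B ≤ Real.sqrt 2 * Real.sqrt (A + B) := by
  have h1 : (Real.sqrt A + Real.sqrt B) ^ 2 ≤ (Real.sqrt 2 * Real.sqrt (A + B)) ^ 2 := by
    have hA' := Real.sq_sqrt hA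
    have hB' := Real.sq_sqrt hB
    have hAB' := Real.sq_sqrt (add_nonneg hA hB)
    have h2 := Real.sq_sqrt (by norm_num : (0:ℝ) ≤ 2)
    have := sq_nonneg (Real.sqrt A - Real.sqrt B)
    nlinarith [Real.sqrt_nonneg A, Real.sqrt_nonneg B]
  have h2 : 0 ≤ Real.sqrt 2 * Real.sqrt (A + B) := by positivity
  nlinarith [add_nonneg (Real.sqrt_nonneg A) (Real.sqrt_nonneg B)]

/-- **Complex-amplitude soundness** (Proposition `QMA⁺_{c,s} ⊆ QMA_{c,4s}`).
If a Hermitian positive semidefinite matrix `P` accepts every real nonnegative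
unit vector with probability at most `s`, then it accepts every complex unit
vector with probability at most `4s`. -/
theorem complex_amplitude_soundness (n : ℕ) (hn : 0 < n)
    (P : Matrix (Fin n) (Fin n) ℂ)
    (hHerm : P.IsHermitian) (hPSD : P.PosSemidef)
    (s : ℝ) (hs : 0 ≤ s)
    (hbound : ∀ χ : Fin n → ℝ, (∀ i, 0 ≤ χ i) → ∑ i, (χ i) ^ 2 = 1 →
      (star (fun i => (χ i : ℂ)) ⬝ᵥ P.mulVec (fun i => (χ i : ℂ))).re ≤ s) :
    ∀ φ : Fin n → ℂ, ∑ i, ‖φ i‖ ^ 2 = 1 →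
      (star φ ⬝ᵥ P.mulVec φ).re ≤ 4 * s := by
  obtain ⟨C, rfl⟩ : ∃ C : Matrix (Fin n) (Fin n) ℂ, P = Cᴴ * C := by
    classical
    open scoped MatrixOrder in
    exact CStarAlgebra.nonneg_iff_eq_star_mul_self.mp hPSD.nonneg
  have key : ∀ v : Fin n → ℂ,
      (star v ⬝ᵥ (Cᴴ * C).mulVec v).re = eNorm (C.mulVec v) ^ 2 := by
    intro v
    rw [eNorm_sq, ← Matrix.mulVec_mulVec, Matrix.dotProduct_mulVec, ← Matrix.star_mulVec]
  set f : (Fin n → ℂ) → ℝ := fun v => eNorm (C.mulVec v) with hf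
  have f_nonneg : ∀ v, 0 ≤ f v := fun v => eNorm_nonneg _
  have f_add : ∀ u v, f (u + v) ≤ f u + f v := by
    intro u v
    simpa [hf, Matrix.mulVec_add] using eNorm_add_le (C.mulVec u) (C.mulVec v)
  have f_smul : ∀ (c : ℂ) v, f (c • v) = ‖c‖ * f v := by
    intro c v
    simp [hf, Matrix.mulVec_smul, eNorm_smul]
  -- Step 0: unit nonneg vectors
  have step0 : ∀ χ : Fin n → ℝ, (∀ i, 0 ≤ χ i) → ∑ i, (χ i) ^ 2 = 1 →
      f (fun i => (χ i : ℂ)) ≤ Real.sqrt s := by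
    intro χ hχ hsum
    have hb := hbound χ hχ hsum
    rw [key] at hb
    have := Real.sqrt_le_sqrt hb
    rwa [Real.sqrt_sq (f_nonneg _)] at this
  -- Step 1: arbitrary nonneg vectors
  have step1 : ∀ χ : Fin n → ℝ, (∀ i, 0 ≤ χ i) →
      f (fun i => (χ i : ℂ)) ≤ Real.sqrt s * Real.sqrt (∑ i, χ i ^ 2) := by
    intro χ hχ
    set t := ∑ i, χ i ^ 2 with ht
    have ht0 : 0 ≤ t := Finset.sum_nonneg fun i _ => sq_nonneg _
    rcases eq_or_lt_of_le ht0 with h0 | h0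
    · have hzero : ∀ i, χ i = 0 := by
        intro i
        have := (Finset.sum_eq_zero_iff_of_nonneg (fun i _ => sq_nonneg (χ i))).mp h0.symm i
          (Finset.mem_univ i)
        exact pow_eq_zero_iff two_ne_zero |>.mp this
      have hz : (fun i => (χ i : ℂ)) = (0 : Fin n → ℂ) := by
        funext i; simp [hzero i]
      rw [hz]
      have : f 0 = 0 := by simp [hf, Matrix.mulVec_zero, eNorm_zero]
      rw [this]; positivity
    · set r := Real.sqrt t with hr
      have hrpos : 0 < r := Real.sqrt_pos.mpr h0
      set χ' : Fin n → ℝ := fun i => χ i / r with hχ'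
      have hχ'nn : ∀ i, 0 ≤ χ' i := fun i => div_nonneg (hχ i) hrpos.le
      have hsum' : ∑ i, χ' i ^ 2 = 1 := by
        simp only [hχ', div_pow, ← Finset.sum_div, ← ht]
        rw [hr, Real.sq_sqrt ht0]
        field_simp
      have hdecomp : (fun i => (χ i : ℂ)) = (r : ℂ) • (fun i => (χ' i : ℂ)) := by
        funext i
        simp only [hχ', Pi.smul_apply, smul_eq_mul]
        push_cast
        field_simp
      rw [hdecomp, f_smul]
      have h1 := step0 χ' hχ'nn hsum'
      have : ‖(r : ℂ)‖ = r := by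
        simp [Complex.norm_real, abs_of_nonneg hrpos.le]
      rw [this]
      calc r * f (fun i => (χ' i : ℂ)) ≤ r * Real.sqrt s :=
            mul_le_mul_of_nonneg_left h1 hrpos.le
        _ = Real.sqrt s * Real.sqrt t := by rw [mul_comm, hr]
  -- Step 2: arbitrary real vectors
  have step2 : ∀ x : Fin n → ℝ,
      f (fun i => (x i : ℂ)) ≤ Real.sqrt 2 * Real.sqrt s * Real.sqrt (∑ i, x i ^ 2) := by
    intro x
    set xp : Fin n → ℝ := fun i => max (x i) 0 with hxp
    set xm : Fin n → ℝ := fun i => max (-x i) 0 with hxm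
    have hxpnn : ∀ i, 0 ≤ xp i := fun i => le_max_right _ _
    have hxmnn : ∀ i, 0 ≤ xm i := fun i => le_max_right _ _
    have hdiff : ∀ i, x i = xp i - xm i := by
      intro i
      rcases le_total (x i) 0 with h | h
      · simp [hxp, hxm, max_eq_right h, max_eq_left (neg_nonneg.mpr h)]
      · simp [hxp, hxm, max_eq_left h, max_eq_right (neg_nonpos.mpr h)]
    have hsq : ∀ i, xp i ^ 2 + xm i ^ 2 = x i ^ 2 := by
      intro i
      rcases le_total (x i) 0 with h | h
      · simp [hxp, hxm, max_eq_right h, max_eq_left (neg_nonneg.mpr h)]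
      · simp [hxp, hxm, max_eq_left h, max_eq_right (neg_nonpos.mpr h)]
    have hdecomp : (fun i => (x i : ℂ))
        = (fun i => (xp i : ℂ)) + (-1 : ℂ) • (fun i => (xm i : ℂ)) := by
      funext i
      simp only [Pi.add_apply, Pi.smul_apply, smul_eq_mul]
      rw [hdiff i]
      push_cast
      ring
    rw [hdecomp]
    set A := ∑ i, xp i ^ 2 with hA
    set B := ∑ i, xm i ^ 2 with hB
    have hA0 : 0 ≤ A := Finset.sum_nonneg fun i _ => sq_nonneg _
    have hB0 : 0 ≤ B := Finset.sum_nonneg fun i _ => sq_nonneg _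
    have hABsum : A + B = ∑ i, x i ^ 2 := by
      rw [hA, hB, ← Finset.sum_add_distrib]
      exact Finset.sum_congr rfl fun i _ => hsq i
    calc f ((fun i => (xp i : ℂ)) + (-1 : ℂ) • (fun i => (xm i : ℂ)))
        ≤ f (fun i => (xp i : ℂ)) + f ((-1 : ℂ) • (fun i => (xm i : ℂ))) := f_add _ _
      _ = f (fun i => (xp i : ℂ)) + f (fun i => (xm i : ℂ)) := by rw [f_smul]; simp
      _ ≤ Real.sqrt s * Real.sqrt A + Real.sqrt s * Real.sqrt B := by
          exact add_le_add (step1 xp hxpnn) (step1 xm hxmnn)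
      _ = Real.sqrt s * (Real.sqrt A + Real.sqrt B) := by ring
      _ ≤ Real.sqrt s * (Real.sqrt 2 * Real.sqrt (A + B)) :=
          mul_le_mul_of_nonneg_left (sqrt_add_sqrt_le hA0 hB0) (Real.sqrt_nonneg s)
      _ = Real.sqrt 2 * Real.sqrt s * Real.sqrt (∑ i, x i ^ 2) := by rw [hABsum]; ring
  -- Step 3: complex vectors
  intro φ hφ
  set x : Fin n → ℝ := fun i => (φ i).re with hx
  set y : Fin n → ℝ := fun i => (φ i).im with hy
  have hdecomp : φ = (fun i => (x i : ℂ)) + Complex.I • (fun i => (y i : ℂ)) := by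
    funext i
    simp only [Pi.add_apply, Pi.smul_apply, smul_eq_mul, hx, hy]
    rw [mul_comm]
    exact (Complex.re_add_im (φ i)).symm
  have hsumxy : (∑ i, x i ^ 2) + (∑ i, y i ^ 2) = 1 := by
    rw [← Finset.sum_add_distrib, ← hφ]
    refine Finset.sum_congr rfl fun i _ => ?_
    rw [Complex.sq_norm, Complex.normSq_apply]
    simp only [hx, hy]
    ring
  have hx0 : 0 ≤ ∑ i, x i ^ 2 := Finset.sum_nonneg fun i _ => sq_nonneg _
  have hy0 : 0 ≤ ∑ i, y i ^ 2 := Finset.sum_nonneg fun i _ => sq_nonneg _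
  have hfφ : f φ ≤ 2 * Real.sqrt s := by
    calc f φ ≤ f (fun i => (x i : ℂ)) + f (Complex.I • (fun i => (y i : ℂ))) := by
          rw [hdecomp]; exact f_add _ _
      _ = f (fun i => (x i : ℂ)) + f (fun i => (y i : ℂ)) := by
          rw [f_smul]; simp
      _ ≤ Real.sqrt 2 * Real.sqrt s * Real.sqrt (∑ i, x i ^ 2)
          + Real.sqrt 2 * Real.sqrt s * Real.sqrt (∑ i, y i ^ 2) :=
          add_le_add (step2 x) (step2 y)
      _ = Real.sqrt 2 * Real.sqrt s * (Real.sqrt (∑ i, x i ^ 2) + Real.sqrt (∑ i, y i ^ 2)) := by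
          ring
      _ ≤ Real.sqrt 2 * Real.sqrt s
          * (Real.sqrt 2 * Real.sqrt ((∑ i, x i ^ 2) + (∑ i, y i ^ 2))) :=
          mul_le_mul_of_nonneg_left (sqrt_add_sqrt_le hx0 hy0) (by positivity)
      _ = 2 * Real.sqrt s := by
          rw [hsumxy, Real.sqrt_one]
          have h2 : Real.sqrt 2 * Real.sqrt 2 = 2 := Real.mul_self_sqrt (by norm_num)
          calc Real.sqrt 2 * Real.sqrt s * (Real.sqrt 2 * 1)
              = Real.sqrt 2 * Real.sqrt 2 * Real.sqrt s := by ring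
            _ = 2 * Real.sqrt s := by rw [h2]
  rw [key]
  calc (f φ) ^ 2 ≤ (2 * Real.sqrt s) ^ 2 :=
        pow_le_pow_left₀ (f_nonneg φ) hfφ 2
    _ = 4 * s := by rw [mul_pow, Real.sq_sqrt hs]; norm_num
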